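/- Let G be a (discrete) group, let m be a mean on ℓ∞(G) satisfying m(𝟙_F) = 0 for every finite F ⊆ G, and let x ∈ G with x ≠ e. Then m lies in the weak-* closure of the set of means μ_S with S a finite nonempty subset of G satisfying S ∩ xS = ∅; precisely, for every finite family Φ ⊆ ℓ∞(G) and every ε > 0 there exists a finite nonempty S ⊆ G with S ∩ xS = ∅ and |m(f) − (1/#S)·∑_{s∈S} f(s)| < ε for all f ∈ Φ. -/

import Mathlib

/-- A mean on `ℓ∞(G)` (realized as `lp (fun _ : G => ℝ) ⊤`, the bounded real-valued
functions on `G`): a positive unital linear functional. -/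
def IsDiscreteMean {G : Type*} (m : lp (fun _ : G => ℝ) ⊤ →ₗ[ℝ] ℝ) : Prop :=
  (∀ f : lp (fun _ : G => ℝ) ⊤, (∀ x, 0 ≤ f x) → 0 ≤ m f) ∧
  (∀ f : lp (fun _ : G => ℝ) ⊤, (∀ x, f x = 1) → m f = 1)

noncomputable def restrL {G : Type*} (A : Set G) (f : lp (fun _ : G => ℝ) ⊤) :
    lp (fun _ : G => ℝ) ⊤ :=
  ⟨A.indicator f, memℓp_infty <| by
    refine ⟨‖f‖, ?_⟩
    rintro r ⟨g, rfl⟩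
    show ‖A.indicator (⇑f) g‖ ≤ ‖f‖
    by_cases h : g ∈ A
    · rw [Set.indicator_of_mem h]
      exact lp.norm_apply_le_norm ENNReal.top_ne_zero f g
    · rw [Set.indicator_of_notMem h]
      exact norm_zero.le.trans (norm_nonneg f)⟩

@[simp] lemma restrL_apply {G : Type*} (A : Set G) (f : lp (fun _ : G => ℝ) ⊤) (g : G) :
    restrL A f g = A.indicator f g := rfl

noncomputable def oneL {G : Type*} : lp (fun _ : G => ℝ) ⊤ :=
  ⟨fun _ => 1, memℓp_infty ⟨1, by rintro r ⟨g, rfl⟩; simp⟩⟩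

@[simp] lemma oneL_apply {G : Type*} (g : G) : (oneL : lp (fun _ : G => ℝ) ⊤) g = 1 := rfl

lemma aux_sel {G : Type*} [Group G] (x : G) (hx : x ≠ 1) {ι : Type*} (P : ι → Set G) :
    ∀ I : Finset ι, (∀ p ∈ I, (P p).Infinite) →
    ∃ t : ι → G, Set.InjOn t ↑I ∧ (∀ p ∈ I, t p ∈ P p) ∧
      ∀ p ∈ I, ∀ q ∈ I, x * t p ≠ t q := by
  classical
  intro I
  induction I using Finset.induction_on with
  | empty => exact fun _ => ⟨fun _ => 1, by simp, by simp, by simp⟩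
  | @insert a s ha ih =>
    intro hP
    obtain ⟨t, hinj, hmem, hfree⟩ := ih fun p hp => hP p (Finset.mem_insert_of_mem hp)
    have hne : ∀ {u : ι}, u ∈ s → u ≠ a := fun hu h => ha (h ▸ hu)
    set B : Finset G := s.image t with hB
    have hbadfin : (↑B ∪ ((fun g => x * g) '' ↑B ∪ (fun g => x⁻¹ * g) '' ↑B) : Set G).Finite :=
      (B.finite_toSet).union ((B.finite_toSet.image _).union (B.finite_toSet.image _))
    have hinf : ((P a) \ (↑B ∪ ((fun g => x * g) '' ↑B ∪ (fun g => x⁻¹ * g) '' ↑B))).Infinite :=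
      (hP a (Finset.mem_insert_self a s)).diff hbadfin
    obtain ⟨s₀, hs₀P, hs₀bad⟩ := hinf.nonempty
    have hs₀B : s₀ ∉ (B : Set G) := fun h => hs₀bad (Or.inl h)
    have hs₀xB : ∀ b ∈ B, x * b ≠ s₀ := by
      intro b hb h
      exact hs₀bad (Or.inr (Or.inl ⟨b, hb, h⟩))
    have hs₀ixB : ∀ b ∈ B, x * s₀ ≠ b := by
      intro b hb h
      exact hs₀bad (Or.inr (Or.inr ⟨b, hb, by rw [← h]; group⟩))
    refine ⟨Function.update t a s₀, ?_, ?_, ?_⟩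
    · rw [Finset.coe_insert]
      rw [Set.injOn_insert (fun h => ha (Finset.mem_coe.mp h))]
      constructor
      · intro u hu v hv huv
        rw [Function.update_of_ne (hne hu), Function.update_of_ne (hne hv)] at huv
        exact hinj hu hv huv
      · rw [Function.update_self]
        rintro ⟨u, hu, huv⟩
        rw [Function.update_of_ne (hne hu)] at huv
        exact hs₀B (huv ▸ Finset.mem_coe.mpr (Finset.mem_image_of_mem t hu))
    · intro p hp
      rcases Finset.mem_insert.mp hp with h | h
      · subst h; rw [Function.update_self]; exact hs₀P
      · rw [Function.update_of_ne (hne h)]; exact hmem p h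
    · intro p hp q hq
      rcases Finset.mem_insert.mp hp with h | h <;> rcases Finset.mem_insert.mp hq with h' | h'
      · subst h; subst h'
        rw [Function.update_self]
        intro hcon
        exact hx (mul_eq_right.mp hcon)
      · subst h
        rw [Function.update_self, Function.update_of_ne (hne h')]
        exact hs₀ixB (t q) (Finset.mem_image_of_mem t h')
      · subst h'
        rw [Function.update_self, Function.update_of_ne (hne h)]
        exact hs₀xB (t p) (Finset.mem_image_of_mem t h)
      · rw [Function.update_of_ne (hne h), Function.update_of_ne (hne h')]
        exact hfree p h q h'

set_option maxHeartbeats 1000000 in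
/-- If `m` is a mean on `ℓ∞(G)` vanishing on characteristic functions of
finite sets and `x ≠ e`, then `m` is a weak-* limit point of means `μ_S` over finite
nonempty sets `S` with `S ∩ xS = ∅`. -/
theorem statement5 {G : Type*} [Group G]
    (m : lp (fun _ : G => ℝ) ⊤ →ₗ[ℝ] ℝ) (hm : IsDiscreteMean m)
    (hvanish : ∀ F : Finset G, ∀ f : lp (fun _ : G => ℝ) ⊤,
      (∀ y, f y = Set.indicator (F : Set G) (fun _ => (1 : ℝ)) y) → m f = 0)
    (x : G) (hx : x ≠ 1)
    (Φ : Finset (lp (fun _ : G => ℝ) ⊤)) (ε : ℝ) (hε : 0 < ε) :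
    ∃ S : Finset G, S.Nonempty ∧ (∀ s ∈ S, x * s ∉ S) ∧
      ∀ f ∈ Φ, |m f - (S.card : ℝ)⁻¹ * ∑ s ∈ S, f s| < ε := by
  classical
  obtain ⟨hpos, hone⟩ := hm
  have hmono : ∀ f g : lp (fun _ : G => ℝ) ⊤, (∀ y, f y ≤ g y) → m f ≤ m g := by
    intro f g h
    have h0 : 0 ≤ m (g - f) := by
      refine hpos _ ?_
      intro y
      rw [lp.coeFn_sub, Pi.sub_apply]
      exact sub_nonneg.mpr (h y)
    rw [map_sub] at h0
    linarith
  set δ : ℝ := ε / 4 with hδdef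
  have hδ : 0 < δ := by positivity
  set C : ℝ := 1 + ∑ f ∈ Φ, ‖f‖ with hCdef
  have hC : 0 < C := by
    have : (0:ℝ) ≤ ∑ f ∈ Φ, ‖f‖ := Finset.sum_nonneg fun f _ => norm_nonneg f
    linarith
  have hfC : ∀ f ∈ Φ, ∀ g : G, |f g| ≤ C := by
    intro f hf g
    have h1 : ‖f g‖ ≤ ‖f‖ := lp.norm_apply_le_norm ENNReal.top_ne_zero f g
    have h2 : ‖f‖ ≤ ∑ f ∈ Φ, ‖f‖ :=
      Finset.single_le_sum (fun f _ => norm_nonneg f) hf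
    calc |f g| = ‖f g‖ := rfl
      _ ≤ ‖f‖ := h1
      _ ≤ C := by rw [hCdef]; linarith
  set φ : G → (↥Φ → ℤ) := fun g f => ⌊(f.1 g) / δ⌋ with hφdef
  have hfib : ∀ a b : G, φ a = φ b → ∀ f ∈ Φ, |f a - f b| ≤ δ := by
    intro a b hab f hf
    have h1 : ⌊(f a) / δ⌋ = ⌊(f b) / δ⌋ := congrFun hab ⟨f, hf⟩
    have h2 : |f a / δ - f b / δ| < 1 := Int.abs_sub_lt_one_of_floor_eq_floor h1
    have h3 : f a - f b = (f a / δ - f b / δ) * δ := by field_simp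
    rw [h3, abs_mul, abs_of_pos hδ]
    calc |f a / δ - f b / δ| * δ ≤ 1 * δ := mul_le_mul_of_nonneg_right h2.le hδ.le
      _ = δ := one_mul δ
  have hrange : (Set.range φ).Finite := by
    have hs : Set.range φ ⊆
        Set.pi Set.univ (fun f : ↥Φ => (Set.Icc ⌊-C/δ⌋ ⌊C/δ⌋ : Set ℤ)) := by
      rintro _ ⟨g, rfl⟩ f _
      have := abs_le.mp (hfC f.1 f.2 g)
      constructor
      · exact Int.floor_le_floor ((div_le_div_iff_of_pos_right hδ).mpr this.1)
      · exact Int.floor_le_floor ((div_le_div_iff_of_pos_right hδ).mpr this.2)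
    exact (Set.Finite.pi fun f => Set.finite_Icc _ _).subset hs
  set V : Finset (↥Φ → ℤ) := hrange.toFinset with hVdef
  set y : (↥Φ → ℤ) → G := fun v => if h : v ∈ Set.range φ then h.choose else 1 with hydef
  have hy : ∀ v ∈ V, φ (y v) = v := by
    intro v hv
    have hv' : v ∈ Set.range φ := hrange.mem_toFinset.mp hv
    simp only [hydef, dif_pos hv']
    exact hv'.choose_spec
  set P : (↥Φ → ℤ) → Set G := fun v => φ ⁻¹' {v} with hPdef
  have hpart : ∀ f : lp (fun _ : G => ℝ) ⊤, ∑ v ∈ V, restrL (P v) f = f := by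
    intro f
    apply lp.ext
    rw [lp.coeFn_sum]
    funext g
    rw [Finset.sum_apply]
    rw [Finset.sum_eq_single (φ g)]
    · exact Set.indicator_of_mem (by simp [hPdef]) _
    · intro v hv hvne
      exact Set.indicator_of_notMem (by simp [hPdef]; exact fun h => hvne h.symm) _
    · intro hng
      exact absurd (hrange.mem_toFinset.mpr ⟨g, rfl⟩) hng
  set α : (↥Φ → ℤ) → ℝ := fun v => m (restrL (P v) oneL) with hαdef
  have hα0 : ∀ v, 0 ≤ α v := by
    intro v
    refine hpos _ ?_
    intro g
    rw [restrL_apply]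
    exact Set.indicator_nonneg (fun _ _ => zero_le_one) g
  have hα1 : ∑ v ∈ V, α v = 1 := by
    calc ∑ v ∈ V, α v = m (∑ v ∈ V, restrL (P v) oneL) := (map_sum m _ V).symm
      _ = m oneL := by rw [hpart]
      _ = 1 := hone _ (fun g => rfl)
  have hαinf : ∀ v, α v ≠ 0 → (P v).Infinite := by
    intro v hv
    by_contra h
    rw [Set.not_infinite] at h
    refine hv (hvanish h.toFinset _ ?_)
    intro g
    rw [restrL_apply, Set.Finite.coe_toFinset]
    rfl
  have hest : ∀ f ∈ Φ, ∀ v ∈ V, |m (restrL (P v) f) - f (y v) * α v| ≤ δ * α v := by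
    intro f hf v hv
    have key : ∀ (c : ℝ), (∀ g ∈ P v, |f g - f (y v)| ≤ c) →
        m (restrL (P v) f) - f (y v) * α v ≤ c * α v ∧
        -(c * α v) ≤ m (restrL (P v) f) - f (y v) * α v := by
      intro c hc
      have hub : m (restrL (P v) f - f (y v) • restrL (P v) oneL) ≤
          m (c • restrL (P v) oneL) := by
        apply hmono
        intro g
        rw [lp.coeFn_sub, Pi.sub_apply, lp.coeFn_smul, Pi.smul_apply, lp.coeFn_smul,
          Pi.smul_apply, smul_eq_mul, smul_eq_mul, restrL_apply, restrL_apply]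
        by_cases hg : g ∈ P v
        · rw [Set.indicator_of_mem hg, Set.indicator_of_mem hg, oneL_apply, mul_one, mul_one]
          have := abs_le.mp (hc g hg)
          linarith [this.2]
        · rw [Set.indicator_of_notMem hg, Set.indicator_of_notMem hg]
          simp
      have hlb : m ((-c) • restrL (P v) oneL) ≤
          m (restrL (P v) f - f (y v) • restrL (P v) oneL) := by
        apply hmono
        intro g
        rw [lp.coeFn_sub, Pi.sub_apply, lp.coeFn_smul, Pi.smul_apply, lp.coeFn_smul,
          Pi.smul_apply, smul_eq_mul, smul_eq_mul, restrL_apply, restrL_apply]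
        by_cases hg : g ∈ P v
        · rw [Set.indicator_of_mem hg, Set.indicator_of_mem hg, oneL_apply, mul_one, mul_one]
          have := abs_le.mp (hc g hg)
          linarith [this.1]
        · rw [Set.indicator_of_notMem hg, Set.indicator_of_notMem hg]
          simp
      rw [map_sub, map_smul, map_smul, smul_eq_mul, smul_eq_mul] at hub hlb
      constructor <;> [skip; skip] <;> nlinarith [hub, hlb]
    have hcv : ∀ g ∈ P v, |f g - f (y v)| ≤ δ := by
      intro g hg
      refine hfib g (y v) ?_ f hf
      have h1 : φ g = v := hg
      rw [h1, hy v hv]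
    have := key δ hcv
    exact abs_le.mpr ⟨this.2, this.1⟩
  have happrox1 : ∀ f ∈ Φ, |m f - ∑ v ∈ V, f (y v) * α v| ≤ δ := by
    intro f hf
    have hmf : m f = ∑ v ∈ V, m (restrL (P v) f) := by
      rw [← map_sum, hpart]
    rw [hmf, ← Finset.sum_sub_distrib]
    calc |∑ v ∈ V, (m (restrL (P v) f) - f (y v) * α v)|
        ≤ ∑ v ∈ V, |m (restrL (P v) f) - f (y v) * α v| := Finset.abs_sum_le_sum_abs _ _
      _ ≤ ∑ v ∈ V, δ * α v := Finset.sum_le_sum fun v hv => hest f hf v hv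
      _ = δ * ∑ v ∈ V, α v := by rw [Finset.mul_sum]
      _ = δ := by rw [hα1, mul_one]
  set W : Finset (↥Φ → ℤ) := V.filter (fun v => α v ≠ 0) with hWdef
  have hWα : ∑ v ∈ W, α v = 1 := by
    rw [hWdef, Finset.sum_filter_ne_zero, hα1]
  have hWsub : W ⊆ V := Finset.filter_subset _ _
  have hWV : ∀ f : lp (fun _ : G => ℝ) ⊤,
      ∑ v ∈ W, f (y v) * α v = ∑ v ∈ V, f (y v) * α v := by
    intro f
    rw [hWdef]
    refine Finset.sum_filter_of_ne ?_
    intro v hv h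
    exact right_ne_zero_of_mul h
  have hWne : W.Nonempty := by
    rcases Finset.eq_empty_or_nonempty W with h | h
    · rw [h, Finset.sum_empty] at hWα
      exact absurd hWα zero_ne_one
    · exact h
  have hWinf : ∀ v ∈ W, (P v).Infinite := by
    intro v hv
    exact hαinf v (Finset.mem_filter.mp hv).2
  obtain ⟨N, hN⟩ := exists_nat_gt (max 1 (2 * W.card * C / δ))
  have hN1 : (1:ℝ) ≤ N := le_of_lt (lt_of_le_of_lt (le_max_left _ _) hN)
  have hN0 : (0:ℝ) < N := lt_of_lt_of_le zero_lt_one hN1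
  have hN2 : 2 * W.card * C / δ < N := lt_of_le_of_lt (le_max_right _ _) hN
  set k : (↥Φ → ℤ) → ℕ := fun v => ⌈(N:ℝ) * α v⌉₊ with hkdef
  have hk1 : ∀ v, (N:ℝ) * α v ≤ k v := fun v => Nat.le_ceil _
  have hk2 : ∀ v, (k v : ℝ) < N * α v + 1 :=
    fun v => Nat.ceil_lt_add_one (mul_nonneg hN0.le (hα0 v))
  set M : ℕ := ∑ v ∈ W, k v with hMdef
  have hMcast : (M:ℝ) = ∑ v ∈ W, (k v : ℝ) := by rw [hMdef]; push_cast; ring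
  have hMlow : (N:ℝ) ≤ M := by
    rw [hMcast]
    calc (N:ℝ) = ∑ v ∈ W, N * α v := by rw [← Finset.mul_sum, hWα, mul_one]
      _ ≤ ∑ v ∈ W, (k v : ℝ) := Finset.sum_le_sum fun v _ => hk1 v
  have hMhigh : (M:ℝ) < N + W.card := by
    rw [hMcast]
    calc ∑ v ∈ W, (k v : ℝ) < ∑ v ∈ W, (N * α v + 1) :=
          Finset.sum_lt_sum_of_nonempty hWne fun v _ => hk2 v
      _ = N * ∑ v ∈ W, α v + W.card := by rw [Finset.sum_add_distrib, ← Finset.mul_sum]; simp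
      _ = N + W.card := by rw [hWα, mul_one]
  have hM0 : (0:ℝ) < M := lt_of_lt_of_le hN0 hMlow
  have hkM : ∀ v ∈ W, |(k v : ℝ)/M - α v| ≤ (1 + W.card * α v)/M := by
    intro v hv
    have h1 : (k v:ℝ) - M * α v ≤ 1 + W.card * α v := by
      nlinarith [hk2 v, hα0 v, hMlow]
    have h2 : -(1 + W.card * α v) ≤ (k v:ℝ) - M * α v := by
      nlinarith [hk1 v, hα0 v, hMhigh]
    have h3 : (k v:ℝ)/M - α v = ((k v:ℝ) - M * α v)/M := by field_simp
    rw [h3, abs_div, abs_of_pos hM0]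
    exact (div_le_div_iff_of_pos_right hM0).mpr (abs_le.mpr ⟨h2, h1⟩)
  -- selection of points
  set I : Finset (Σ _ : (↥Φ → ℤ), ℕ) := W.sigma (fun v => Finset.range (k v)) with hIdef
  have hIinf : ∀ p ∈ I, (P p.1).Infinite := by
    intro p hp
    exact hWinf p.1 (Finset.mem_sigma.mp hp).1
  obtain ⟨t, hinj, htmem, hfree⟩ := aux_sel x hx (fun p => P p.1) I hIinf
  set S : Finset G := I.image t with hSdef
  have hcardI : I.card = M := by
    rw [hIdef, Finset.card_sigma]
    simp [hMdef]
  have hcardS : S.card = M := by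
    rw [hSdef, Finset.card_image_of_injOn hinj, hcardI]
  have hSne : S.Nonempty := by
    rw [← Finset.card_pos, hcardS]
    exact_mod_cast hM0
  refine ⟨S, hSne, ?_, ?_⟩
  · intro s hs hcon
    obtain ⟨p, hp, rfl⟩ := Finset.mem_image.mp hs
    obtain ⟨q, hq, hqe⟩ := Finset.mem_image.mp hcon
    exact hfree p hp q hq hqe.symm
  · intro f hf
    have hSsum : ∑ s ∈ S, f s = ∑ p ∈ I, f (t p) :=
      Finset.sum_image (fun a ha b hb h => hinj ha hb h)
    have hsigma : ∑ p ∈ I, f (t p) = ∑ v ∈ W, ∑ i ∈ Finset.range (k v), f (t ⟨v, i⟩) :=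
      Finset.sum_sigma _ _ _
    -- Term 3 estimate
    have hterm3 : |∑ p ∈ I, f (t p) - ∑ v ∈ W, (k v : ℝ) * f (y v)| ≤ M * δ := by
      rw [hsigma, ← Finset.sum_sub_distrib]
      calc |∑ v ∈ W, (∑ i ∈ Finset.range (k v), f (t ⟨v, i⟩) - (k v : ℝ) * f (y v))|
          ≤ ∑ v ∈ W, |∑ i ∈ Finset.range (k v), f (t ⟨v, i⟩) - (k v : ℝ) * f (y v)| :=
            Finset.abs_sum_le_sum_abs _ _
        _ ≤ ∑ v ∈ W, (k v : ℝ) * δ := by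
            refine Finset.sum_le_sum fun v hv => ?_
            have hrw : (k v : ℝ) * f (y v) = ∑ _i ∈ Finset.range (k v), f (y v) := by
              rw [Finset.sum_const, Finset.card_range, nsmul_eq_mul]
            rw [hrw, ← Finset.sum_sub_distrib]
            calc |∑ i ∈ Finset.range (k v), (f (t ⟨v, i⟩) - f (y v))|
                ≤ ∑ i ∈ Finset.range (k v), |f (t ⟨v, i⟩) - f (y v)| :=
                  Finset.abs_sum_le_sum_abs _ _
              _ ≤ ∑ _i ∈ Finset.range (k v), δ := by
                  refine Finset.sum_le_sum fun i hi => ?_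
                  have hmemI : (⟨v, i⟩ : Σ _ : (↥Φ → ℤ), ℕ) ∈ I :=
                    Finset.mem_sigma.mpr ⟨hv, hi⟩
                  have h1 : φ (t ⟨v, i⟩) = v := htmem _ hmemI
                  have h2 : φ (y v) = v := hy v (hWsub hv)
                  exact hfib _ _ (h1.trans h2.symm) f hf
              _ = (k v : ℝ) * δ := by rw [Finset.sum_const, Finset.card_range, nsmul_eq_mul]
        _ = M * δ := by rw [← Finset.sum_mul, ← hMcast]
    -- Term 2 estimate
    have hterm2 : |∑ v ∈ W, (k v : ℝ)/M * f (y v) - ∑ v ∈ W, f (y v) * α v| < δ := by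
      rw [← Finset.sum_sub_distrib]
      have e1 : ∀ v ∈ W, (k v : ℝ)/M * f (y v) - f (y v) * α v
          = ((k v : ℝ)/M - α v) * f (y v) := by intro v _; ring
      rw [Finset.sum_congr rfl e1]
      calc |∑ v ∈ W, ((k v : ℝ)/M - α v) * f (y v)|
          ≤ ∑ v ∈ W, |((k v : ℝ)/M - α v) * f (y v)| := Finset.abs_sum_le_sum_abs _ _
        _ ≤ ∑ v ∈ W, (1 + W.card * α v)/M * C := by
            refine Finset.sum_le_sum fun v hv => ?_
            rw [abs_mul]
            refine mul_le_mul (hkM v hv) (hfC f hf _) (abs_nonneg _) ?_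
            refine div_nonneg ?_ hM0.le
            have h1 : (0:ℝ) ≤ W.card * α v := mul_nonneg (Nat.cast_nonneg _) (hα0 v)
            linarith
        _ = (W.card + W.card * ∑ v ∈ W, α v)/M * C := by
            rw [← Finset.sum_mul, ← Finset.sum_div, Finset.sum_add_distrib,
              Finset.sum_const, ← Finset.mul_sum]
            simp
        _ = 2 * W.card * C / M := by rw [hWα]; ring
        _ ≤ 2 * W.card * C / N := by
            have hnum : (0:ℝ) ≤ 2 * W.card * C :=
              mul_nonneg (mul_nonneg zero_le_two (Nat.cast_nonneg _)) hC.le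
            exact div_le_div_of_nonneg_left hnum hN0 hMlow
        _ < δ := by
            rw [div_lt_iff₀ hN0]
            have h2 := (div_lt_iff₀ hδ).mp hN2
            linarith
    -- final assembly
    have h1 := happrox1 f hf
    rw [← hWV f] at h1
    have hB3 : (S.card : ℝ)⁻¹ * ∑ s ∈ S, f s = (M:ℝ)⁻¹ * ∑ p ∈ I, f (t p) := by
      rw [hcardS, hSsum]
    have hB2 : ∑ v ∈ W, (k v : ℝ)/M * f (y v) = (M:ℝ)⁻¹ * ∑ v ∈ W, (k v : ℝ) * f (y v) := by
      rw [Finset.mul_sum]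
      refine Finset.sum_congr rfl fun v _ => by ring
    have e3 : |∑ v ∈ W, (k v : ℝ)/M * f (y v) - (S.card : ℝ)⁻¹ * ∑ s ∈ S, f s| ≤ δ := by
      rw [hB3, hB2, ← mul_sub, abs_mul, abs_of_pos (inv_pos.mpr hM0), abs_sub_comm]
      calc (M:ℝ)⁻¹ * |∑ p ∈ I, f (t p) - ∑ v ∈ W, (k v:ℝ) * f (y v)|
          ≤ (M:ℝ)⁻¹ * (M * δ) :=
            mul_le_mul_of_nonneg_left hterm3 (inv_pos.mpr hM0).le
        _ = δ := by field_simp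
    have tri1 : |m f - (S.card : ℝ)⁻¹ * ∑ s ∈ S, f s|
        ≤ |m f - ∑ v ∈ W, f (y v) * α v|
          + |∑ v ∈ W, f (y v) * α v - (S.card : ℝ)⁻¹ * ∑ s ∈ S, f s| :=
      abs_sub_le _ _ _
    have tri2 : |∑ v ∈ W, f (y v) * α v - (S.card : ℝ)⁻¹ * ∑ s ∈ S, f s|
        ≤ |∑ v ∈ W, f (y v) * α v - ∑ v ∈ W, (k v : ℝ)/M * f (y v)|
          + |∑ v ∈ W, (k v : ℝ)/M * f (y v) - (S.card : ℝ)⁻¹ * ∑ s ∈ S, f s| :=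
      abs_sub_le _ _ _
    rw [abs_sub_comm] at hterm2
    have hεδ : ε = 4 * δ := by rw [hδdef]; ring
    rw [hεδ]
    linarith
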